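/- Let G be a group acting transitively on a finite set J with |J| even, and let σ be an involution of the set of G-orbits of (J × J)/∼ (unordered pairs, including the diagonal). Suppose each orbit S satisfies: |S| is divisible by |J| or |S| = s·|J|/2 with s odd. Then there exists at least one G-orbit S of the set of unordered pairs J × J/∼ such that σ(S) = S and |S| = s·|J|/2 for some odd integer s. -/
import Mathlib


/-- The action of `G` on unordered pairs from `J`. -/
instance sym2MulAction (G J : Type) [Group G] [MulAction G J] :
    MulAction G (Sym2 J) where
  smul g := Sym2.map (g • ·)
  one_smul x := by
    refine Sym2.ind (fun a b => ?_) x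
    show Sym2.map _ _ = _
    simp
  mul_smul g h x := by
    refine Sym2.ind (fun a b => ?_) x
    show Sym2.map _ _ = Sym2.map _ (Sym2.map _ _)
    simp [mul_smul]

/-- Let `G` act transitively on a finite (nonempty) set `J` with `|J|` even, and
let `σ` be an involution of the set of `G`-orbits of the set `(J × J)/∼` of
unordered pairs (diagonal included) preserving the cardinality of orbits.
If every orbit `S` satisfies `|J| ∣ |S|` or `|S| = s·|J|/2` with `s` odd, then
there is an orbit `S` with `σ(S) = S` and `|S| = s·|J|/2` for some odd `s`. -/
theorem stmt5 (G J : Type) [Group G] [Fintype J] [Nonempty J]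
    [MulAction G J] [MulAction.IsPretransitive G J]
    (heven : Even (Fintype.card J))
    (σ : Quotient (MulAction.orbitRel G (Sym2 J)) ≃
        Quotient (MulAction.orbitRel G (Sym2 J)))
    (hinv : ∀ q, σ (σ q) = q)
    (hcard : ∀ x : Sym2 J,
      Nat.card {y : Sym2 J //
          Quotient.mk (MulAction.orbitRel G (Sym2 J)) y
            = σ (Quotient.mk (MulAction.orbitRel G (Sym2 J)) x)}
        = Nat.card (MulAction.orbit G x))
    (horb : ∀ x : Sym2 J,
      (Fintype.card J ∣ Nat.card (MulAction.orbit G x)) ∨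
      ∃ s : ℕ, Odd s ∧ 2 * Nat.card (MulAction.orbit G x) = s * Fintype.card J) :
    ∃ x : Sym2 J,
      σ (Quotient.mk (MulAction.orbitRel G (Sym2 J)) x)
        = Quotient.mk (MulAction.orbitRel G (Sym2 J)) x ∧
      ∃ s : ℕ, Odd s ∧ 2 * Nat.card (MulAction.orbit G x) = s * Fintype.card J := by
  classical
  obtain ⟨m, hm⟩ := heven
  have hm1 : 1 ≤ m := by
    have : 0 < Fintype.card J := Fintype.card_pos
    omega
  haveI : Fintype (Quotient (MulAction.orbitRel G (Sym2 J))) := Fintype.ofFinite _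
  set c : Quotient (MulAction.orbitRel G (Sym2 J)) → ℕ :=
    fun q => Nat.card (MulAction.orbit G q.out) with hc
  have fiber_iff : ∀ (q : Quotient (MulAction.orbitRel G (Sym2 J))) (y : Sym2 J),
      Quotient.mk (MulAction.orbitRel G (Sym2 J)) y = q ↔ y ∈ MulAction.orbit G q.out := by
    intro q y
    rw [Quotient.mk_eq_iff_out]
    exact MulAction.orbitRel_apply
  have fiber_card : ∀ q : Quotient (MulAction.orbitRel G (Sym2 J)),
      Nat.card {y : Sym2 J // Quotient.mk (MulAction.orbitRel G (Sym2 J)) y = q} = c q := by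
    intro q
    exact Nat.card_congr (Equiv.subtypeEquivRight (fiber_iff q))
  have hcc : ∀ q, c (σ q) = c q := by
    intro q
    have h1 := hcard q.out
    rw [Quotient.out_eq] at h1
    rw [← fiber_card (σ q)]
    exact h1
  set P : Quotient (MulAction.orbitRel G (Sym2 J)) → Prop :=
    fun q => ∃ s : ℕ, Odd s ∧ 2 * c q = s * Fintype.card J with hP
  have horb' : ∀ q, Fintype.card J ∣ c q ∨ P q := fun q => horb q.out
  have ht : ∀ q, ∃ t : ℕ, c q = m * t ∧ (Odd t ↔ P q) := by
    intro q
    rcases Classical.em (P q) with h | h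
    · obtain ⟨s, hs, hseq⟩ := h
      refine ⟨s, ?_, iff_of_true hs (⟨s, hs, hseq⟩)⟩
      have h2 : 2 * c q = 2 * (m * s) := by rw [hseq, hm]; ring
      omega
    · rcases horb' q with hd | hd
      · obtain ⟨k, hk⟩ := hd
        refine ⟨2 * k, ?_, iff_of_false (by simp [Nat.odd_iff, Nat.mul_mod_right]) h⟩
        rw [hk, hm]; ring
      · exact absurd hd h
  choose t htc htp using ht
  have htotal : ∑ q, c q = m * (2 * m + 1) := by
    have h1 : Fintype.card (Sym2 J) = ∑ q, c q := by
      rw [← Finset.card_univ,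
        Finset.card_eq_sum_card_fiberwise
          (f := fun y : Sym2 J => Quotient.mk (MulAction.orbitRel G (Sym2 J)) y)
          (t := Finset.univ) (fun x _ => Finset.mem_univ _)]
      refine Finset.sum_congr rfl fun q _ => ?_
      rw [← fiber_card q, Nat.card_eq_fintype_card, Fintype.card_subtype]
    have h2 : Fintype.card (Sym2 J) = Nat.choose (Fintype.card J + 1) 2 := Sym2.card
    have h3 : Nat.choose (Fintype.card J + 1) 2 = m * (2 * m + 1) := by
      rw [Nat.choose_two_right]
      have e1 : Fintype.card J + 1 - 1 = Fintype.card J := rfl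
      rw [e1]
      have e2 : (Fintype.card J + 1) * Fintype.card J = 2 * (m * (2 * m + 1)) := by
        rw [hm]; ring
      rw [e2, Nat.mul_div_cancel_left _ (by norm_num)]
    omega
  have htsum : ∑ q, t q = 2 * m + 1 := by
    have h4 : ∑ q, m * t q = m * (2 * m + 1) := by
      rw [← htotal]; exact Finset.sum_congr rfl fun q _ => (htc q).symm
    rw [← Finset.mul_sum] at h4
    exact Nat.eq_of_mul_eq_mul_left (by omega) h4
  have hodd : Odd (Fintype.card {q // P q}) := by
    have h1 : Odd (∑ q, t q) := by rw [htsum]; exact ⟨m, by ring⟩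
    rw [Finset.odd_sum_iff_odd_card_odd] at h1
    rw [Fintype.card_subtype]
    convert h1 using 2
    ext q
    simp [htp q]
  have hPσ : ∀ q, P q → P (σ q) := by
    intro q hq
    obtain ⟨s, hs, hseq⟩ := hq
    exact ⟨s, hs, by rw [hcc q]; exact hseq⟩
  let e : Equiv.Perm {q // P q} :=
    { toFun := fun x => ⟨σ x.1, hPσ x.1 x.2⟩
      invFun := fun x => ⟨σ x.1, hPσ x.1 x.2⟩
      left_inv := fun x => Subtype.ext (hinv x.1)
      right_inv := fun x => Subtype.ext (hinv x.1) }
  haveI : Fact (Nat.Prime 2) := ⟨Nat.prime_two⟩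
  have he : e ^ 2 ^ 1 = 1 := by
    ext x
    show σ (σ x.1) = x.1
    exact hinv x.1
  have h2 : ¬ (2 ∣ Fintype.card {q // P q}) := by
    rw [Nat.odd_iff] at hodd
    omega
  obtain ⟨⟨q, hq⟩, hfix⟩ := Equiv.Perm.exists_fixed_point_of_prime h2 he
  refine ⟨q.out, ?_, ?_⟩
  · have hqq : σ q = q := congrArg Subtype.val hfix
    rw [Quotient.out_eq]
    exact hqq
  · obtain ⟨s, hs, hseq⟩ := hq
    exact ⟨s, hs, hseq⟩
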